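/- As an identity of formal power series in q, 256q⁸P(q³)⁸X(−q³)⁸ − 2048q⁸P(q³)⁷X(−q³)⁷Φ(−q⁹)Ψ(q⁹) + 6400q⁸P(q³)⁶X(−q³)⁶Φ(−q⁹)²Ψ(q⁹)² − 8192q⁸P(q³)⁵X(−q³)⁵Φ(−q⁹)³Ψ(q⁹)³ + 5776q⁸P(q³)⁴X(−q³)⁴Φ(−q⁹)⁴Ψ(q⁹)⁴ − 2048q⁸P(q³)³X(−q³)³Φ(−q⁹)⁵Ψ(q⁹)⁵ + 400q⁸P(q³)²X(−q³)²Φ(−q⁹)⁶Ψ(q⁹)⁶ − 32q⁸P(q³)X(−q³)Φ(−q⁹)⁷Ψ(q⁹)⁷ + q⁸Φ(−q⁹)⁸Ψ(q⁹)⁸ = 19·3³·q⁸·(q⁹;q⁹)_∞⁸ (q¹⁸;q¹⁸)_∞⁸. -/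

import Mathlib

open PowerSeries

/-- The infinite product `(q^j; q^k)_∞ = ∏_{n ≥ 0} (1 - q^(j + k*n))` as a formal power
series over `ℤ`: for `j ≥ 1` its `n`-th coefficient is the (stable) `n`-th coefficient
of the partial products `∏_{m < n+1} (1 - q^(j + k*m))`. -/
noncomputable def qp (j k : ℕ) : PowerSeries ℤ :=
  PowerSeries.mk fun n =>
    PowerSeries.coeff n
      (∏ m ∈ Finset.range (n + 1), (1 - (PowerSeries.X : PowerSeries ℤ) ^ (j + k * m)))

/-- Substitution of `q^k` for `q` in a formal power series (for `k ≥ 1`). -/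
noncomputable def substQ (k : ℕ) (f : PowerSeries ℤ) : PowerSeries ℤ :=
  PowerSeries.mk fun n => if k ∣ n then PowerSeries.coeff (n / k) f else 0

/-- `Φ(-q) = (q;q)_∞² / (q²;q²)_∞`. -/
noncomputable def Phi : PowerSeries ℤ := qp 1 1 ^ 2 * Ring.inverse (qp 2 2)

/-- `Ψ(q) = (q²;q²)_∞ / (q;q²)_∞`. -/
noncomputable def Psi : PowerSeries ℤ := qp 2 2 * Ring.inverse (qp 1 2)

/-- `P(q) = (q²;q⁶)_∞ (q⁴;q⁶)_∞ (q³;q³)_∞² / (q;q)_∞`. -/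
noncomputable def Pq : PowerSeries ℤ := qp 2 6 * qp 4 6 * qp 3 3 ^ 2 * Ring.inverse (qp 1 1)

/-- `X(-q) = (q;q)_∞ (q⁶;q⁶)_∞² / ((q²;q²)_∞ (q³;q³)_∞)`. -/
noncomputable def Xq : PowerSeries ℤ := qp 1 1 * qp 6 6 ^ 2 * Ring.inverse (qp 2 2 * qp 3 3)

/-- `Φ(-q³)` -/ noncomputable def Phi3 : PowerSeries ℤ := substQ 3 Phi
/-- `Φ(-q⁹)` -/ noncomputable def Phi9 : PowerSeries ℤ := substQ 9 Phi
/-- `Ψ(q³)` -/ noncomputable def Psi3 : PowerSeries ℤ := substQ 3 Psi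
/-- `Ψ(q⁹)` -/ noncomputable def Psi9 : PowerSeries ℤ := substQ 9 Psi
/-- `P(q³)` -/ noncomputable def P3 : PowerSeries ℤ := substQ 3 Pq
/-- `X(-q³)` -/ noncomputable def X3 : PowerSeries ℤ := substQ 3 Xq

/- ### Auxiliary lemmas -/

/-- Stability: the `n`-th coefficient of partial products is stable once `N ≥ n+1`. -/
lemma coeff_prod_stab (j k : ℕ) (hj : 1 ≤ j) (hk : 1 ≤ k) (n : ℕ) :
    ∀ N, n + 1 ≤ N →
    (PowerSeries.coeff n (∏ m ∈ Finset.range N, (1 - (PowerSeries.X : PowerSeries ℤ) ^ (j + k * m))) =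
      PowerSeries.coeff n (∏ m ∈ Finset.range (n + 1), (1 - (PowerSeries.X : PowerSeries ℤ) ^ (j + k * m)))) := by
  intro N
  induction N with
  | zero => omega
  | succ N ih =>
    intro hN
    rcases Nat.lt_or_ge (n + 1) (N + 1) with h | h
    · have hNn : n + 1 ≤ N := by omega
      have hkN : N ≤ k * N := Nat.le_mul_of_pos_left N (by omega)
      rw [Finset.prod_range_succ, mul_one_sub, map_sub,
        PowerSeries.coeff_mul_X_pow', if_neg (by omega), sub_zero, ih hNn]
    · have : N + 1 = n + 1 := by omega
      rw [this]

lemma coeff_qp (j k : ℕ) (hj : 1 ≤ j) (hk : 1 ≤ k) (n N : ℕ) (hN : n + 1 ≤ N) :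
    PowerSeries.coeff n (qp j k) =
      PowerSeries.coeff n (∏ m ∈ Finset.range N, (1 - (PowerSeries.X : PowerSeries ℤ) ^ (j + k * m))) := by
  rw [qp, PowerSeries.coeff_mk, coeff_prod_stab j k hj hk n N hN]

lemma coeff_mul_congr (f F g G : PowerSeries ℤ) (n : ℕ)
    (hf : ∀ i ≤ n, PowerSeries.coeff i f = PowerSeries.coeff i F)
    (hg : ∀ i ≤ n, PowerSeries.coeff i g = PowerSeries.coeff i G) :
    PowerSeries.coeff n (f * g) = PowerSeries.coeff n (F * G) := by
  rw [PowerSeries.coeff_mul, PowerSeries.coeff_mul]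
  refine Finset.sum_congr rfl fun p hp => ?_
  rw [Finset.HasAntidiagonal.mem_antidiagonal] at hp
  rw [hf p.1 (by omega), hg p.2 (by omega)]

/-- `(q;q²)(q²;q²) = (q;q)`. -/
lemma prod_split2 (N : ℕ) :
    (∏ m ∈ Finset.range N, (1 - (PowerSeries.X : PowerSeries ℤ) ^ (1 + 2 * m))) *
      (∏ m ∈ Finset.range N, (1 - (PowerSeries.X : PowerSeries ℤ) ^ (2 + 2 * m))) =
    ∏ m ∈ Finset.range (2 * N), (1 - (PowerSeries.X : PowerSeries ℤ) ^ (1 + 1 * m)) := by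
  induction N with
  | zero => simp
  | succ N ih =>
    rw [Finset.prod_range_succ, Finset.prod_range_succ,
      show 2 * (N + 1) = 2 * N + 1 + 1 by ring, Finset.prod_range_succ, Finset.prod_range_succ,
      ← ih, show 1 + 1 * (2 * N) = 1 + 2 * N by ring, show 1 + 1 * (2 * N + 1) = 2 + 2 * N by ring]
    ring

/-- `(q²;q⁶)(q⁴;q⁶)(q⁶;q⁶) = (q²;q²)`. -/
lemma prod_split3 (N : ℕ) :
    (∏ m ∈ Finset.range N, (1 - (PowerSeries.X : PowerSeries ℤ) ^ (2 + 6 * m))) *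
      (∏ m ∈ Finset.range N, (1 - (PowerSeries.X : PowerSeries ℤ) ^ (4 + 6 * m))) *
      (∏ m ∈ Finset.range N, (1 - (PowerSeries.X : PowerSeries ℤ) ^ (6 + 6 * m))) =
    ∏ m ∈ Finset.range (3 * N), (1 - (PowerSeries.X : PowerSeries ℤ) ^ (2 + 2 * m)) := by
  induction N with
  | zero => simp
  | succ N ih =>
    rw [Finset.prod_range_succ, Finset.prod_range_succ, Finset.prod_range_succ,
      show 3 * (N + 1) = 3 * N + 1 + 1 + 1 by ring, Finset.prod_range_succ,
      Finset.prod_range_succ, Finset.prod_range_succ, ← ih,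
      show 2 + 2 * (3 * N) = 2 + 6 * N by ring, show 2 + 2 * (3 * N + 1) = 4 + 6 * N by ring,
      show 2 + 2 * (3 * N + 1 + 1) = 6 + 6 * N by ring]
    ring

lemma qp_split2 : qp 1 2 * qp 2 2 = qp 1 1 := by
  ext n
  rw [coeff_mul_congr (qp 1 2) (∏ m ∈ Finset.range (n + 1), (1 - (PowerSeries.X : PowerSeries ℤ) ^ (1 + 2 * m)))
      (qp 2 2) (∏ m ∈ Finset.range (n + 1), (1 - (PowerSeries.X : PowerSeries ℤ) ^ (2 + 2 * m))) n
      (fun i hi => coeff_qp 1 2 (by norm_num) (by norm_num) i (n + 1) (by omega))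
      (fun i hi => coeff_qp 2 2 (by norm_num) (by norm_num) i (n + 1) (by omega)),
    prod_split2, ← coeff_qp 1 1 (by norm_num) (by norm_num) n (2 * (n + 1)) (by omega)]

lemma qp_split3 : qp 2 6 * qp 4 6 * qp 6 6 = qp 2 2 := by
  ext n
  rw [coeff_mul_congr (qp 2 6 * qp 4 6)
      ((∏ m ∈ Finset.range (n + 1), (1 - (PowerSeries.X : PowerSeries ℤ) ^ (2 + 6 * m))) *
        (∏ m ∈ Finset.range (n + 1), (1 - (PowerSeries.X : PowerSeries ℤ) ^ (4 + 6 * m))))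
      (qp 6 6) (∏ m ∈ Finset.range (n + 1), (1 - (PowerSeries.X : PowerSeries ℤ) ^ (6 + 6 * m))) n
      (fun i hi => coeff_mul_congr (qp 2 6) _ (qp 4 6) _ i
        (fun t ht => coeff_qp 2 6 (by norm_num) (by norm_num) t (n + 1) (by omega))
        (fun t ht => coeff_qp 4 6 (by norm_num) (by norm_num) t (n + 1) (by omega)))
      (fun i hi => coeff_qp 6 6 (by norm_num) (by norm_num) i (n + 1) (by omega)),
    prod_split3, ← coeff_qp 2 2 (by norm_num) (by norm_num) n (3 * (n + 1)) (by omega)]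

lemma substQ_one (k : ℕ) (hk : 0 < k) : substQ k 1 = 1 := by
  ext n
  rw [substQ, PowerSeries.coeff_mk]
  rcases Nat.eq_zero_or_pos n with rfl | hn
  · simp
  · by_cases h : k ∣ n
    · have hnk : 0 < n / k := Nat.div_pos (Nat.le_of_dvd hn h) hk
      rw [if_pos h, PowerSeries.coeff_one, if_neg (by omega), PowerSeries.coeff_one,
        if_neg (by omega)]
    · rw [if_neg h, PowerSeries.coeff_one, if_neg (by omega)]

lemma substQ_sub (k : ℕ) (f g : PowerSeries ℤ) :
    substQ k (f - g) = substQ k f - substQ k g := by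
  ext n
  simp only [substQ, PowerSeries.coeff_mk, map_sub]
  split_ifs <;> simp

lemma substQ_X_pow (k e : ℕ) (hk : 0 < k) :
    substQ k ((PowerSeries.X : PowerSeries ℤ) ^ e) = PowerSeries.X ^ (k * e) := by
  ext n
  rw [substQ, PowerSeries.coeff_mk]
  by_cases h : k ∣ n
  · obtain ⟨m, rfl⟩ := h
    rw [if_pos ⟨m, rfl⟩, Nat.mul_div_cancel_left _ hk, PowerSeries.coeff_X_pow,
      PowerSeries.coeff_X_pow]
    by_cases hme : m = e
    · subst hme; simp
    · rw [if_neg hme, if_neg (fun hc => hme (Nat.eq_of_mul_eq_mul_left hk hc))]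
  · rw [if_neg h, PowerSeries.coeff_X_pow, if_neg (by rintro rfl; exact h ⟨e, rfl⟩)]

lemma substQ_mul (k : ℕ) (hk : 0 < k) (f g : PowerSeries ℤ) :
    substQ k (f * g) = substQ k f * substQ k g := by
  ext n
  rw [PowerSeries.coeff_mul]
  simp only [substQ, PowerSeries.coeff_mk]
  by_cases h : k ∣ n
  · obtain ⟨m, rfl⟩ := h
    rw [if_pos ⟨m, rfl⟩, Nat.mul_div_cancel_left _ hk, PowerSeries.coeff_mul,
      Finset.Nat.sum_antidiagonal_eq_sum_range_succ_mk,
      Finset.Nat.sum_antidiagonal_eq_sum_range_succ_mk]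
    have hsub : (Finset.range (m + 1)).image (k * ·) ⊆ Finset.range (k * m + 1) := by
      intro j hj
      simp only [Finset.mem_image, Finset.mem_range] at hj ⊢
      obtain ⟨i, hi, rfl⟩ := hj
      have : k * i ≤ k * m := Nat.mul_le_mul_left k (by omega)
      omega
    have hzero : ∀ j ∈ Finset.range (k * m + 1), j ∉ (Finset.range (m + 1)).image (k * ·) →
        (if k ∣ j then PowerSeries.coeff (j / k) f else 0) *
          (if k ∣ (k * m - j) then PowerSeries.coeff ((k * m - j) / k) g else 0) = 0 := by
      intro j hj hjim
      have hnd : ¬ k ∣ j := by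
        intro hd
        obtain ⟨i, rfl⟩ := hd
        apply hjim
        simp only [Finset.mem_range] at hj
        have hi : i ≤ m := by
          by_contra hc
          have : k * m < k * i := (Nat.mul_lt_mul_left hk).mpr (by omega)
          omega
        exact Finset.mem_image.mpr ⟨i, Finset.mem_range.mpr (by omega), rfl⟩
      rw [if_neg hnd, zero_mul]
    rw [← Finset.sum_subset hsub hzero, Finset.sum_image
      (fun a _ b _ hab => Nat.eq_of_mul_eq_mul_left hk hab)]
    refine Finset.sum_congr rfl fun i hi => ?_
    simp only [Finset.mem_range] at hi
    have him : i ≤ m := by omega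
    have h1 : k ∣ k * i := ⟨i, rfl⟩
    obtain ⟨d, rfl⟩ := Nat.le.dest him
    have h2 : k * (i + d) - k * i = k * d := by rw [Nat.mul_add]; omega
    have h3 : i + d - i = d := by omega
    rw [if_pos h1, Nat.mul_div_cancel_left _ hk, h2, if_pos ⟨d, rfl⟩,
      Nat.mul_div_cancel_left _ hk, h3]
  · rw [if_neg h]
    symm
    refine Finset.sum_eq_zero fun p hp => ?_
    rw [Finset.HasAntidiagonal.mem_antidiagonal] at hp
    by_cases h1 : k ∣ p.1
    · rw [if_neg (fun h2 => h (hp ▸ Nat.dvd_add h1 h2)), mul_zero]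
    · rw [if_neg h1, zero_mul]

lemma substQ_qp (k j l : ℕ) (hk : 0 < k) (hj : 1 ≤ j) (hl : 1 ≤ l) :
    substQ k (qp j l) = qp (k * j) (k * l) := by
  have hprod : ∀ N, (∏ m ∈ Finset.range N, (1 - (PowerSeries.X : PowerSeries ℤ) ^ (k * j + k * l * m))) =
      substQ k (∏ m ∈ Finset.range N, (1 - (PowerSeries.X : PowerSeries ℤ) ^ (j + l * m))) := by
    intro N
    induction N with
    | zero => simp [substQ_one k hk]
    | succ N ih =>
      rw [Finset.prod_range_succ, Finset.prod_range_succ, substQ_mul k hk, ← ih,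
        substQ_sub, substQ_one k hk, substQ_X_pow k _ hk,
        show k * (j + l * N) = k * j + k * l * N by ring]
  ext n
  conv_rhs => rw [qp, PowerSeries.coeff_mk]
  rw [hprod (n + 1)]
  simp only [substQ, PowerSeries.coeff_mk]
  by_cases h : k ∣ n
  · obtain ⟨m, rfl⟩ := h
    rw [if_pos ⟨m, rfl⟩, if_pos ⟨m, rfl⟩, Nat.mul_div_cancel_left _ hk]
    rw [qp, PowerSeries.coeff_mk]
    have hmk : m + 1 ≤ k * m + 1 := by
      have : m ≤ k * m := Nat.le_mul_of_pos_left m hk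
      omega
    rw [coeff_prod_stab j l hj hl m (k * m + 1) hmk]
  · rw [if_neg h, if_neg h]

lemma isUnit_qp (j k : ℕ) (hj : 1 ≤ j) : IsUnit (qp j k) := by
  rw [PowerSeries.isUnit_iff_constantCoeff]
  have : PowerSeries.constantCoeff (qp j k) = 1 := by
    rw [← PowerSeries.coeff_zero_eq_constantCoeff_apply, qp, PowerSeries.coeff_mk,
      Finset.prod_range_one, map_sub, PowerSeries.coeff_X_pow, if_neg (by omega)]
    simp
  rw [this]
  exact isUnit_one

lemma PhiPsi_eq : Phi * Psi = qp 1 1 * qp 2 2 := by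
  have h2 : IsUnit (qp 2 2) := isUnit_qp 2 2 (by norm_num)
  have h12 : IsUnit (qp 1 2) := isUnit_qp 1 2 (by norm_num)
  rw [Phi, Psi]
  have step1 : qp 1 1 ^ 2 * Ring.inverse (qp 2 2) * (qp 2 2 * Ring.inverse (qp 1 2)) =
      qp 1 1 ^ 2 * Ring.inverse (qp 1 2) * (Ring.inverse (qp 2 2) * qp 2 2) := by ring
  rw [step1, Ring.inverse_mul_cancel _ h2, mul_one,
    show qp 1 1 ^ 2 = qp 1 1 * (qp 1 2 * qp 2 2) by rw [qp_split2]; ring,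
    show qp 1 1 * (qp 1 2 * qp 2 2) * Ring.inverse (qp 1 2) =
      qp 1 1 * qp 2 2 * (qp 1 2 * Ring.inverse (qp 1 2)) by ring,
    Ring.mul_inverse_cancel _ h12, mul_one]

lemma PqXq_eq : Pq * Xq = qp 3 3 * qp 6 6 := by
  have h1 : IsUnit (qp 1 1) := isUnit_qp 1 1 (by norm_num)
  have h23 : IsUnit (qp 2 2 * qp 3 3) :=
    (isUnit_qp 2 2 (by norm_num)).mul (isUnit_qp 3 3 (by norm_num))
  rw [Pq, Xq]
  have step1 : qp 2 6 * qp 4 6 * qp 3 3 ^ 2 * Ring.inverse (qp 1 1) *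
      (qp 1 1 * qp 6 6 ^ 2 * Ring.inverse (qp 2 2 * qp 3 3)) =
      qp 2 6 * qp 4 6 * qp 3 3 ^ 2 * qp 6 6 ^ 2 * Ring.inverse (qp 2 2 * qp 3 3) *
        (Ring.inverse (qp 1 1) * qp 1 1) := by ring
  rw [step1, Ring.inverse_mul_cancel _ h1, mul_one,
    show qp 2 6 * qp 4 6 * qp 3 3 ^ 2 * qp 6 6 ^ 2 =
      qp 3 3 * qp 6 6 * (qp 2 2 * qp 3 3) by rw [← qp_split3]; ring,
    show qp 3 3 * qp 6 6 * (qp 2 2 * qp 3 3) * Ring.inverse (qp 2 2 * qp 3 3) =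
      qp 3 3 * qp 6 6 * ((qp 2 2 * qp 3 3) * Ring.inverse (qp 2 2 * qp 3 3)) by ring,
    Ring.mul_inverse_cancel _ h23, mul_one]

lemma P3X3_eq : P3 * X3 = qp 9 9 * qp 18 18 := by
  rw [P3, X3, ← substQ_mul 3 (by norm_num), PqXq_eq, substQ_mul 3 (by norm_num),
    substQ_qp 3 3 3 (by norm_num) (by norm_num) (by norm_num),
    substQ_qp 3 6 6 (by norm_num) (by norm_num) (by norm_num)]

lemma Phi9Psi9_eq : Phi9 * Psi9 = qp 9 9 * qp 18 18 := by
  rw [Phi9, Psi9, ← substQ_mul 9 (by norm_num), PhiPsi_eq, substQ_mul 9 (by norm_num),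
    substQ_qp 9 1 1 (by norm_num) (by norm_num) (by norm_num),
    substQ_qp 9 2 2 (by norm_num) (by norm_num) (by norm_num)]

lemma abstract_poly {R : Type*} [CommRing R] (p x f s e q : R) (h1 : p * x = e) (h2 : f * s = e) :
    256 * q ^ 8 * p ^ 8 * x ^ 8 - 2048 * q ^ 8 * p ^ 7 * x ^ 7 * f * s + 6400 * q ^ 8 * p ^ 6 * x ^ 6 * f ^ 2 * s ^ 2 - 8192 * q ^ 8 * p ^ 5 * x ^ 5 * f ^ 3 * s ^ 3 + 5776 * q ^ 8 * p ^ 4 * x ^ 4 * f ^ 4 * s ^ 4 - 2048 * q ^ 8 * p ^ 3 * x ^ 3 * f ^ 5 * s ^ 5 + 400 * q ^ 8 * p ^ 2 * x ^ 2 * f ^ 6 * s ^ 6 - 32 * q ^ 8 * p * x * f ^ 7 * s ^ 7 + q ^ 8 * f ^ 8 * s ^ 8 = 513 * q ^ 8 * e ^ 8 := by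
  linear_combination (q ^ 8 * ((256)*e^7 + (256)*(p*x)*e^6 + (256)*(p*x)^2*e^5 + (256)*(p*x)^3*e^4 + (256)*(p*x)^4*e^3 + (256)*(p*x)^5*e^2 + (256)*(p*x)^6*e + (256)*(p*x)^7 + (-2048)*e*e^6 + (-2048)*e*(p*x)*e^5 + (-2048)*e*(p*x)^2*e^4 + (-2048)*e*(p*x)^3*e^3 + (-2048)*e*(p*x)^4*e^2 + (-2048)*e*(p*x)^5*e + (-2048)*e*(p*x)^6 + (6400)*e^2*e^5 + (6400)*e^2*(p*x)*e^4 + (6400)*e^2*(p*x)^2*e^3 + (6400)*e^2*(p*x)^3*e^2 + (6400)*e^2*(p*x)^4*e + (6400)*e^2*(p*x)^5 + (-8192)*e^3*e^4 + (-8192)*e^3*(p*x)*e^3 + (-8192)*e^3*(p*x)^2*e^2 + (-8192)*e^3*(p*x)^3*e + (-8192)*e^3*(p*x)^4 + (5776)*e^4*e^3 + (5776)*e^4*(p*x)*e^2 + (5776)*e^4*(p*x)^2*e + (5776)*e^4*(p*x)^3 + (-2048)*e^5*e^2 + (-2048)*e^5*(p*x)*e + (-2048)*e^5*(p*x)^2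 + (400)*e^6*e + (400)*e^6*(p*x) + (-32)*e^7)) * h1 + (q ^ 8 * ((-2048)*(p*x)^7 + (6400)*(p*x)^6*e + (6400)*(p*x)^6*(f*s) + (-8192)*(p*x)^5*e^2 + (-8192)*(p*x)^5*(f*s)*e + (-8192)*(p*x)^5*(f*s)^2 + (5776)*(p*x)^4*e^3 + (5776)*(p*x)^4*(f*s)*e^2 + (5776)*(p*x)^4*(f*s)^2*e + (5776)*(p*x)^4*(f*s)^3 + (-2048)*(p*x)^3*e^4 + (-2048)*(p*x)^3*(f*s)*e^3 + (-2048)*(p*x)^3*(f*s)^2*e^2 + (-2048)*(p*x)^3*(f*s)^3*e + (-2048)*(p*x)^3*(f*s)^4 + (400)*(p*x)^2*e^5 + (400)*(p*x)^2*(f*s)*e^4 + (400)*(p*x)^2*(f*s)^2*e^3 + (400)*(p*x)^2*(f*s)^3*e^2 + (400)*(p*x)^2*(f*s)^4*e + (400)*(p*x)^2*(f*s)^5 + (-32)*(p*x)*e^6 + (-32)*(p*x)*(f*s)*e^5 + (-32)*(p*x)*(f*s)^2*e^4 + (-32)*(p*x)*(f*s)^3*e^3 + (-32)*(p*x)*(f*s)^4*e^2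 + (-32)*(p*x)*(f*s)^5*e + (-32)*(p*x)*(f*s)^6 + (1)*e^7 + (1)*(f*s)*e^6 + (1)*(f*s)^2*e^5 + (1)*(f*s)^3*e^4 + (1)*(f*s)^4*e^3 + (1)*(f*s)^5*e^2 + (1)*(f*s)^6*e + (1)*(f*s)^7)) * h2

theorem C_eval :
    256 * (PowerSeries.X : PowerSeries ℤ) ^ 8 * P3 ^ 8 * X3 ^ 8 - 2048 * (PowerSeries.X : PowerSeries ℤ) ^ 8 * P3 ^ 7 * X3 ^ 7 * Phi9 * Psi9 + 6400 * (PowerSeries.X : PowerSeries ℤ) ^ 8 * P3 ^ 6 * X3 ^ 6 * Phi9 ^ 2 * Psi9 ^ 2 - 8192 * (PowerSeries.X : PowerSeries ℤ) ^ 8 * P3 ^ 5 * X3 ^ 5 * Phi9 ^ 3 * Psi9 ^ 3 + 5776 * (PowerSeries.X : PowerSeries ℤ) ^ 8 * P3 ^ 4 * X3 ^ 4 * Phi9 ^ 4 * Psi9 ^ 4 - 2048 * (PowerSeries.X : PowerSeries ℤ) ^ 8 * P3 ^ 3 * X3 ^ 3 * Phi9 ^ 5 * Psi9 ^ 5 +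 400 * (PowerSeries.X : PowerSeries ℤ) ^ 8 * P3 ^ 2 * X3 ^ 2 * Phi9 ^ 6 * Psi9 ^ 6 - 32 * (PowerSeries.X : PowerSeries ℤ) ^ 8 * P3 * X3 * Phi9 ^ 7 * Psi9 ^ 7 + (PowerSeries.X : PowerSeries ℤ) ^ 8 * Phi9 ^ 8 * Psi9 ^ 8 = 19 * 3 ^ 3 * (PowerSeries.X : PowerSeries ℤ) ^ 8 * (qp 9 9 ^ 8 * qp 18 18 ^ 8) := by
  have h := abstract_poly P3 X3 Phi9 Psi9 (qp 9 9 * qp 18 18) (PowerSeries.X : PowerSeries ℤ) P3X3_eq Phi9Psi9_eq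
  linear_combination h
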